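/- The binary operation ∘ on sl₂(ℂ) = span{e, f, h} defined by h∘e = −2e, e∘h = −4e, h∘f = 2f, f∘h = 4f, e∘f = (1/2)h, f∘e = −(1/2)h, h∘h = e∘e = f∘f = 0 satisfies the anti-pre-Lie identities, and its commutator x∘y − y∘x recovers the standard Lie bracket of sl₂(ℂ) (with [h,e] = 2e, [h,f] = −2f, [e,f] = h). -/

import Mathlib

set_option maxHeartbeats 1000000 in
/-- The operation `∘` on `sl₂(ℂ)` defined by `h∘e = −2e`, `e∘h = −4e`,
`h∘f = 2f`, `f∘h = 4f`, `e∘f = (1/2)h`, `f∘e = −(1/2)h`, `h∘h = e∘e = f∘f = 0`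
satisfies the anti-pre-Lie identities, and its commutator recovers the standard
Lie bracket of `sl₂(ℂ)`: `[h,e] = 2e`, `[h,f] = −2f`, `[e,f] = h`. -/
theorem stmt2 {A : Type*} [AddCommGroup A] [Module ℂ A]
    (B : Module.Basis (Fin 3) ℂ A) (e f h : A)
    (he : e = B 0) (hf : f = B 1) (hh : h = B 2)
    (c : A →ₗ[ℂ] A →ₗ[ℂ] A)
    (hhe : c h e = (-2 : ℂ) • e) (heh : c e h = (-4 : ℂ) • e)
    (hhf : c h f = (2 : ℂ) • f) (hfh : c f h = (4 : ℂ) • f)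
    (hef : c e f = (1/2 : ℂ) • h) (hfe : c f e = (-(1/2) : ℂ) • h)
    (hhh : c h h = 0) (hee : c e e = 0) (hff : c f f = 0) :
    (∀ x y z : A, c x (c y z) - c y (c x z) = c (c y x - c x y) z) ∧
    (∀ x y z : A,
      (c (c x y - c y x) z - c z (c x y - c y x)) +
      (c (c y z - c z y) x - c x (c y z - c z y)) +
      (c (c z x - c x z) y - c y (c z x - c x z)) = 0) ∧
    (c h e - c e h = (2 : ℂ) • e) ∧
    (c h f - c f h = (-2 : ℂ) • f) ∧
    (c e f - c f e = h) := by
  subst he hf hh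
  set L : (A →ₗ[ℂ] A) →ₗ[ℂ] (A →ₗ[ℂ] A) →ₗ[ℂ] A →ₗ[ℂ] A := LinearMap.llcomp ℂ A A A with hL
  set G1 : A →ₗ[ℂ] A →ₗ[ℂ] (A →ₗ[ℂ] A) := ((L.comp c).compl₂ c) with hG1
  have key1 : G1 - G1.flip = ((c.flip - c).compr₂ c) := by
    apply LinearMap.ext_basis B B
    intro i j
    apply B.ext
    intro k
    fin_cases i <;> fin_cases j <;> fin_cases k <;>
      simp [hG1, hL, hhe, heh, hhf, hfh, hef, hfe, hhh, hee, hff, smul_smul] <;> module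
  set K : A →ₗ[ℂ] A →ₗ[ℂ] (A →ₗ[ℂ] A) := ((L.comp (c.flip - c)).compl₂ (c - c.flip)) with hK
  set K' : A →ₗ[ℂ] A →ₗ[ℂ] (A →ₗ[ℂ] A) := ((L.comp (c.flip - c)).compl₂ (c.flip - c)) with hK'
  set J : A →ₗ[ℂ] A →ₗ[ℂ] (A →ₗ[ℂ] A) :=
    ((c - c.flip).compr₂ c) - ((c - c.flip).compr₂ c.flip) + K + K'.flip with hJ
  have key2 : J = 0 := by
    apply LinearMap.ext_basis B B
    intro i j
    apply B.ext
    intro k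
    fin_cases i <;> fin_cases j <;> fin_cases k <;>
      (simp only [hJ, hK, hK', hL, LinearMap.sub_apply, LinearMap.add_apply,
        LinearMap.compr₂_apply, LinearMap.compl₂_apply, LinearMap.flip_apply,
        LinearMap.comp_apply, LinearMap.llcomp_apply, LinearMap.zero_apply,
        map_sub, LinearMap.map_sub₂];
       simp [hhe, heh, hhf, hfh, hef, hfe, hhh, hee, hff, smul_smul]) <;> module
  refine ⟨?_, ?_, by rw [hhe, heh]; module, by rw [hhf, hfh]; module,
      by rw [hef, hfe]; module⟩
  · intro x y z
    have h1 : (G1 - G1.flip) x y z = ((c.flip - c).compr₂ c) x y z := by rw [key1]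
    simpa [hG1, hL, map_sub, sub_eq_iff_eq_add] using h1
  · intro x y z
    have h2 : J x y z = (0 : A →ₗ[ℂ] A →ₗ[ℂ] (A →ₗ[ℂ] A)) x y z := by rw [key2]
    simp only [hJ, hK, hK', hL, LinearMap.sub_apply, LinearMap.add_apply,
      LinearMap.compr₂_apply, LinearMap.compl₂_apply, LinearMap.flip_apply,
      LinearMap.comp_apply, LinearMap.llcomp_apply, LinearMap.zero_apply,
      map_sub, LinearMap.map_sub₂] at h2 ⊢
    linear_combination (norm := module) h2
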